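/- Let q be a prime power and suppose A₁, A₂ ∈ F_q[T] are coprime with r := deg A₁ ≥ 2, and let n ≥ max{r, deg A₂} + r - 2. Then there exists a sequence α ∈ F_q^{n+1} with rank H_{n₁,n₂}(α) = r, ρ(α) = r, π(α) = 0, whose characteristic polynomials are A₁, A₂; moreover α is unique up to multiplication by elements of F_q^*. -/

import Mathlib

open Matrix Polynomial

/-- The `l × m` Hankel matrix whose `(i,j)` entry (zero-indexed) is `α (i + j)`. -/
def hankel (F : Type) [Field F] (l m : ℕ) (α : ℕ → F) : Matrix (Fin l) (Fin m) F :=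
  Matrix.of fun i j => α (i.1 + j.1)

/-- `ρ(α)`: the largest `l ≤ n₁ = (n+2)/2` such that the top-left `l × l` Hankel matrix
of `α` is invertible (`0` if none exists). -/
noncomputable def rhoC (F : Type) [Field F] (n : ℕ) (α : ℕ → F) : ℕ :=
  sSup {l | l ≤ (n + 2) / 2 ∧ (hankel F l l α).det ≠ 0}

/-- `π(α) = rank H_{n₁,n₂}(α) - ρ(α)`. -/
noncomputable def piC (F : Type) [Field F] (n : ℕ) (α : ℕ → F) : ℕ :=
  (hankel F ((n + 2) / 2) ((n + 3) / 2) α).rank - rhoC F n α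

/-- `deg B ≤ k` for an integer bound `k` (so `k < 0` forces `B = 0`). -/
def degLE (F : Type) [Field F] (B : Polynomial F) (k : ℤ) : Prop :=
  ∀ i : ℕ, k < (i : ℤ) → B.coeff i = 0

/-- `A₁, A₂` are characteristic polynomials for the sequence `α` (of length `n+1`) with
first characteristic degree `c₁ = r` and second characteristic degree `c₂ = n+2-r`:
the kernels of all the Hankel matrices `H_{l,m}(α)`, `l+m-2 = n`, consist exactly of the
(coefficient vectors of) polynomials `B₁A₁ + B₂A₂` with `deg B₁ ≤ m - c₁ - 1` and
`deg B₂ ≤ m - c₂ - 1`. -/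
def IsCharSeq (F : Type) [Field F] (n r : ℕ) (A₁ A₂ : Polynomial F) (α : ℕ → F) : Prop :=
  ∀ l m : ℕ, 1 ≤ l → 1 ≤ m → l + m = n + 2 →
    {v : Fin m → F | (hankel F l m α).mulVec v = 0} =
    {v : Fin m → F | ∃ B₁ B₂ : Polynomial F,
      degLE F B₁ ((m : ℤ) - r - 1) ∧ degLE F B₂ ((m : ℤ) - ((n : ℤ) + 2 - r) - 1) ∧
      v = fun i : Fin m => (B₁ * A₁ + B₂ * A₂).coeff (i : ℕ)}

/-- A sequence `α ∈ F^{n+1}` viewed as a function `ℕ → F` (zero beyond index `n`). -/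
def extSeq (F : Type) [Field F] (n : ℕ) (α : Fin (n + 1) → F) : ℕ → F :=
  fun i => if h : i < n + 1 then α ⟨i, h⟩ else 0

/-- The extension of a sequence of length `n+1` by a new entry `c` at index `n+1`. -/
def extendSeq (F : Type) [Field F] (n : ℕ) (α : ℕ → F) (c : F) : ℕ → F :=
  fun i => if i = n + 1 then c else α i

/-- `α` is a quasi-regular sequence of length `n+1` with rank `r` whose characteristic
polynomials are `A₁, A₂`. -/
def GoodSeq (F : Type) [Field F] (n r : ℕ) (A₁ A₂ : Polynomial F) (α : ℕ → F) : Prop :=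
  (hankel F ((n + 2) / 2) ((n + 3) / 2) α).rank = r ∧
  rhoC F n α = r ∧ piC F n α = 0 ∧ IsCharSeq F n r A₁ A₂ α

namespace S8
open Finset
variable {F : Type} [Field F]

/-! ### The shift action of polynomials on sequences -/

def shiftL (F : Type) [Field F] : (ℕ → F) →ₗ[F] (ℕ → F) where
  toFun α := fun s => α (s+1)
  map_add' _ _ := rfl
  map_smul' _ _ := rfl

noncomputable def act (B : Polynomial F) : (ℕ → F) →ₗ[F] (ℕ → F) :=
  Polynomial.aeval (shiftL F) B

lemma shiftL_pow (j : ℕ) (α : ℕ → F) (s : ℕ) : ((shiftL F ^ j) α) s = α (s + j) := by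
  induction j generalizing α s with
  | zero => simp
  | succ k ih =>
    rw [pow_succ, Module.End.mul_apply, ih]
    rfl

lemma act_apply (B : Polynomial F) (α : ℕ → F) (s : ℕ) :
    act B α s = ∑ j ∈ Finset.range (B.natDegree + 1), B.coeff j * α (s + j) := by
  rw [act, aeval_eq_sum_range]
  simp [LinearMap.sum_apply, Finset.sum_apply, shiftL_pow, smul_eq_mul]

lemma act_mul (B C : Polynomial F) (α : ℕ → F) : act (B * C) α = act B (act C α) := by
  simp [act, _root_.map_mul, Module.End.mul_apply]

lemma act_add (B C : Polynomial F) (α : ℕ → F) : act (B + C) α = act B α + act C α := by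
  simp [act, map_add]

lemma act_one (α : ℕ → F) : act (1 : Polynomial F) α = α := by
  simp [act]

lemma act_comm (B C : Polynomial F) (α : ℕ → F) : act B (act C α) = act C (act B α) := by
  rw [← act_mul, mul_comm, act_mul]

lemma act_X_pow (s : ℕ) (α : ℕ → F) (t : ℕ) : act (X ^ s : Polynomial F) α t = α (t + s) := by
  rw [act, map_pow, aeval_X, shiftL_pow]

lemma act_apply_ext (B : Polynomial F) (α : ℕ → F) (s N : ℕ)
    (h : ∀ j, N ≤ j → B.coeff j = 0) :
    act B α s = ∑ j ∈ Finset.range N, B.coeff j * α (s + j) := by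
  rw [act_apply]
  rcases le_total (B.natDegree + 1) N with hle | hle
  · exact Finset.sum_subset (Finset.range_subset_range.2 hle) (fun j hj hj' => by
      rw [coeff_eq_zero_of_natDegree_lt (by simp only [Finset.mem_range] at hj' ⊢; omega),
        zero_mul])
  · exact (Finset.sum_subset (Finset.range_subset_range.2 hle) (fun j hj hj' => by
      rw [h j (by simp only [Finset.mem_range] at hj'; omega), zero_mul])).symm

/-! ### degLE lemmas -/

lemma degLE_zero (k : ℤ) : degLE F 0 k := fun i _ => rfl

lemma degLE_mono {B : Polynomial F} {k k' : ℤ} (hk : k ≤ k') (h : degLE F B k) :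
    degLE F B k' := fun i hi => h i (lt_of_le_of_lt hk hi)

lemma degLE_of_natDegree_le {B : Polynomial F} {k : ℤ} (h : (B.natDegree : ℤ) ≤ k) :
    degLE F B k := fun i hi =>
  coeff_eq_zero_of_natDegree_lt (by exact_mod_cast lt_of_le_of_lt h hi)

lemma natDegree_cast_le_of_degLE {B : Polynomial F} {k : ℤ} (h : degLE F B k) (hB : B ≠ 0) :
    (B.natDegree : ℤ) ≤ k := by
  by_contra h'
  exact hB (Polynomial.leadingCoeff_eq_zero.mp (h B.natDegree (by omega)))

lemma eq_zero_of_degLE_neg {B : Polynomial F} {k : ℤ} (hk : k < 0) (h : degLE F B k) :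
    B = 0 := by
  ext i
  simpa using h i (lt_of_lt_of_le hk (Int.natCast_nonneg i))

lemma degLE_mul {B C : Polynomial F} {kb kc : ℤ} (hb : degLE F B kb) (hc : degLE F C kc) :
    degLE F (B * C) (kb + kc) := by
  by_cases hB : B = 0
  · simpa [hB] using degLE_zero _
  by_cases hC : C = 0
  · simpa [hC] using degLE_zero _
  refine degLE_of_natDegree_le ?_
  have h1 := natDegree_cast_le_of_degLE hb hB
  have h2 := natDegree_cast_le_of_degLE hc hC
  have h3 := Polynomial.natDegree_mul_le (p := B) (q := C)
  push_cast
  omega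

lemma degLE_add {B C : Polynomial F} {k : ℤ} (hb : degLE F B k) (hc : degLE F C k) :
    degLE F (B + C) k := fun i hi => by
  rw [coeff_add, hb i hi, hc i hi, add_zero]

lemma degLE_sub {B C : Polynomial F} {k : ℤ} (hb : degLE F B k) (hc : degLE F C k) :
    degLE F (B - C) k := fun i hi => by
  rw [coeff_sub, hb i hi, hc i hi, sub_zero]

lemma natDegree_le_of_degLE {B : Polynomial F} {k : ℤ} (h : degLE F B k) (k' : ℕ)
    (hk : k ≤ (k' : ℤ)) : B.natDegree ≤ k' :=
  natDegree_le_iff_coeff_eq_zero.2 fun N hN => h N (by push_cast; omega)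

/-! ### The recurrence extension operator -/

noncomputable def extV (A₁ : Polynomial F) (r : ℕ) (β : ℕ → F) : ℕ → F
  | s =>
    if _h : s < r then β s
    else -(A₁.coeff r)⁻¹ * ∑ j ∈ (Finset.range r).attach,
      A₁.coeff j.1 * extV A₁ r β (s - r + j.1)
  termination_by s => s
  decreasing_by
    have := Finset.mem_range.1 j.2; omega

lemma extV_lt (A₁ : Polynomial F) (r : ℕ) (β : ℕ → F) (s : ℕ) (h : s < r) :
    extV A₁ r β s = β s := by
  rw [extV]; simp [h]

lemma extV_ge (A₁ : Polynomial F) (r : ℕ) (β : ℕ → F) (s : ℕ) (h : ¬ s < r) :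
    extV A₁ r β s = -(A₁.coeff r)⁻¹ * ∑ j ∈ Finset.range r,
      A₁.coeff j * extV A₁ r β (s - r + j) := by
  rw [extV]; simp only [h, dif_neg, not_false_iff]
  rw [Finset.sum_attach (Finset.range r) (fun j => A₁.coeff j * extV A₁ r β (s - r + j))]

section Main

variable {A₁ A₂ : Polynomial F} {r n : ℕ}

/-- Sequences satisfying the `A₁`-recurrence everywhere and vanishing on the first `r`
entries vanish. -/
lemma zero_of_act (hdeg : A₁.natDegree = r) (hlead : A₁.coeff r ≠ 0) {β : ℕ → F}
    (hact : act A₁ β = 0) (h0 : ∀ i, i < r → β i = 0) : β = 0 := by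
  have key : ∀ i, β i = 0 := by
    intro i
    induction i using Nat.strong_induction_on with
    | _ i ih =>
    by_cases h : i < r
    · exact h0 i h
    · have hrec := congrFun hact (i - r)
      rw [act_apply, hdeg, Finset.sum_range_succ] at hrec
      simp only [Pi.zero_apply] at hrec
      have hz : ∑ j ∈ Finset.range r, A₁.coeff j * β (i - r + j) = 0 :=
        Finset.sum_eq_zero fun j hj => by
          have hj' := Finset.mem_range.1 hj
          rw [ih (i - r + j) (by omega), mul_zero]
      have hi : i - r + r = i := by omega
      rw [hz, hi, zero_add] at hrec
      exact (mul_eq_zero.mp hrec).resolve_left hlead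
  funext i
  exact key i

lemma extV_act (hr : 1 ≤ r) (hdeg : A₁.natDegree = r) (hlead : A₁.coeff r ≠ 0) (β : ℕ → F) :
    act A₁ (extV A₁ r β) = 0 := by
  funext s
  rw [act_apply, hdeg, Finset.sum_range_succ]
  rw [extV_ge A₁ r β (s + r) (by omega)]
  have hidx : ∀ j : ℕ, s + r - r + j = s + j := fun j => by omega
  have hsum : ∑ j ∈ Finset.range r, A₁.coeff j * extV A₁ r β (s + r - r + j)
      = ∑ j ∈ Finset.range r, A₁.coeff j * extV A₁ r β (s + j) := by
    refine Finset.sum_congr rfl fun j _ => by rw [hidx j]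
  rw [hsum, ← mul_assoc, mul_neg, mul_inv_cancel₀ hlead, neg_mul, one_mul,
    add_neg_cancel]
  rfl

lemma extV_agree (hdeg : A₁.natDegree = r) (hlead : A₁.coeff r ≠ 0) (β : ℕ → F)
    (hβ : ∀ s, s + r ≤ n → act A₁ β s = 0) : ∀ i, i ≤ n → extV A₁ r β i = β i := by
  intro i
  induction i using Nat.strong_induction_on with
  | _ i ih =>
  intro hin
  by_cases h : i < r
  · exact extV_lt A₁ r β i h
  · rw [extV_ge A₁ r β i h]
    have hrec := hβ (i - r) (by omega)
    rw [act_apply, hdeg, Finset.sum_range_succ] at hrec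
    have hi : i - r + r = i := by omega
    rw [hi] at hrec
    have hsum : ∑ j ∈ Finset.range r, A₁.coeff j * extV A₁ r β (i - r + j)
        = ∑ j ∈ Finset.range r, A₁.coeff j * β (i - r + j) := by
      refine Finset.sum_congr rfl fun j hj => ?_
      have hj' := Finset.mem_range.1 hj
      rw [ih (i - r + j) (by omega) (by omega)]
    have h2 : ∑ j ∈ Finset.range r, A₁.coeff j * β (i - r + j) = -(A₁.coeff r * β i) :=
      eq_neg_of_add_eq_zero_left hrec
    rw [hsum, h2, neg_mul_neg, inv_mul_cancel_left₀ hlead]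

/-! ### The special sequence γ -/

noncomputable def gamF (A₁ : Polynomial F) (r : ℕ) : ℕ → F :=
  extV A₁ r (fun i => if i = r - 1 then 1 else 0)

lemma gam_small (i : ℕ) (h : i < r - 1) : gamF A₁ r i = 0 := by
  rw [gamF, extV_lt A₁ r _ i (by omega), if_neg (by omega)]

lemma gam_top (hr : 1 ≤ r) : gamF A₁ r (r - 1) = 1 := by
  rw [gamF, extV_lt A₁ r _ (r-1) (by omega), if_pos rfl]

lemma gam_act (hr : 1 ≤ r) (hdeg : A₁.natDegree = r) (hlead : A₁.coeff r ≠ 0) :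
    act A₁ (gamF A₁ r) = 0 := extV_act hr hdeg hlead _

/-! ### Triangular solving: every recurrence sequence is `act D γ` -/

noncomputable def dseq (A₁ : Polynomial F) (r : ℕ) (δ : ℕ → F) : ℕ → F
  | s => δ s - ∑ t ∈ (Finset.range s).attach,
      dseq A₁ r δ t.1 * gamF A₁ r (s + (r - 1 - t.1))
  termination_by s => s
  decreasing_by
    have := Finset.mem_range.1 t.2; omega

lemma dseq_eq (A₁ : Polynomial F) (r : ℕ) (δ : ℕ → F) (s : ℕ) :
    dseq A₁ r δ s = δ s - ∑ t ∈ Finset.range s,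
      dseq A₁ r δ t * gamF A₁ r (s + (r - 1 - t)) := by
  rw [dseq]
  rw [Finset.sum_attach (Finset.range s) (fun t => dseq A₁ r δ t * gamF A₁ r (s + (r - 1 - t)))]

noncomputable def Dpoly (A₁ : Polynomial F) (r : ℕ) (δ : ℕ → F) : Polynomial F :=
  ∑ j ∈ Finset.range r, Polynomial.C (dseq A₁ r δ (r - 1 - j)) * X ^ j

lemma Dpoly_coeff (δ : ℕ → F) (i : ℕ) :
    (Dpoly A₁ r δ).coeff i = if i < r then dseq A₁ r δ (r - 1 - i) else 0 := by
  simp only [Dpoly, Polynomial.finset_sum_coeff, Polynomial.coeff_C_mul,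
    Polynomial.coeff_X_pow, mul_ite, mul_one, mul_zero]
  rw [Finset.sum_ite_eq (Finset.range r) i (fun j => dseq A₁ r δ (r - 1 - j))]
  simp [Finset.mem_range]

lemma Dpoly_coeff_ge (δ : ℕ → F) (j : ℕ) (h : r ≤ j) : (Dpoly A₁ r δ).coeff j = 0 := by
  rw [Dpoly_coeff, if_neg (by omega)]

lemma actD_vals (hr : 1 ≤ r) (δ : ℕ → F) (s : ℕ) (hs : s < r) :
    act (Dpoly A₁ r δ) (gamF A₁ r) s = δ s := by
  rw [act_apply_ext _ _ s r (fun j hj => Dpoly_coeff_ge δ j hj)]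
  have h1 : ∑ j ∈ Finset.range r, (Dpoly A₁ r δ).coeff j * gamF A₁ r (s + j)
      = ∑ t ∈ Finset.range r, dseq A₁ r δ t * gamF A₁ r (s + (r - 1 - t)) := by
    refine Finset.sum_nbij' (fun j => r - 1 - j) (fun t => r - 1 - t) ?_ ?_ ?_ ?_ ?_ <;>
      intro a ha <;> simp only [Finset.mem_range] at ha ⊢
    · omega
    · omega
    · omega
    · omega
    · rw [Dpoly_coeff, if_pos ha]
      have h2 : r - 1 - (r - 1 - a) = a := by omega
      rw [h2]
  rw [h1]
  have h2 : ∑ t ∈ Finset.range (s+1),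
        dseq A₁ r δ t * gamF A₁ r (s + (r - 1 - t))
      = ∑ t ∈ Finset.range r, dseq A₁ r δ t * gamF A₁ r (s + (r - 1 - t)) := by
    refine Finset.sum_subset (Finset.range_subset_range.2 (by omega)) fun t ht ht' => ?_
    have h3 := Finset.mem_range.1 ht
    have h4 : ¬ t < s + 1 := fun hc => ht' (Finset.mem_range.2 hc)
    rw [gam_small (s + (r - 1 - t)) (by omega), mul_zero]
  rw [← h2, Finset.sum_range_succ]
  have h5 : s + (r - 1 - s) = r - 1 := by omega
  rw [h5, gam_top hr, mul_one, dseq_eq]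
  ring

lemma actD_eq (hr : 1 ≤ r) (hdeg : A₁.natDegree = r) (hlead : A₁.coeff r ≠ 0)
    (δ : ℕ → F) (hδ : act A₁ δ = 0) : act (Dpoly A₁ r δ) (gamF A₁ r) = δ := by
  have hdiff : act A₁ (act (Dpoly A₁ r δ) (gamF A₁ r) - δ) = 0 := by
    rw [map_sub, hδ, sub_zero, act_comm, gam_act hr hdeg hlead, map_zero]
  have h0 : ∀ i, i < r → (act (Dpoly A₁ r δ) (gamF A₁ r) - δ) i = 0 := by
    intro i hi
    simp [actD_vals hr δ i hi]
  have := zero_of_act hdeg hlead hdiff h0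
  have h2 := congrFun this
  funext s
  have h3 := h2 s
  simp only [Pi.sub_apply, Pi.zero_apply, sub_eq_zero] at h3
  exact h3

lemma dseq_vanish (δ : ℕ → F) (l : ℕ) (h0 : ∀ i, i < l → δ i = 0) :
    ∀ s, s < l → dseq A₁ r δ s = 0 := by
  intro s
  induction s using Nat.strong_induction_on with
  | _ s ih =>
  intro hs
  rw [dseq_eq, h0 s hs, zero_sub, neg_eq_zero]
  exact Finset.sum_eq_zero fun t ht => by
    rw [ih t (Finset.mem_range.1 ht) (by have := Finset.mem_range.1 ht; omega), zero_mul]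

lemma Dpoly_degLE (δ : ℕ → F) (l : ℕ) (hlr : l ≤ r) (h0 : ∀ i, i < l → δ i = 0) :
    degLE F (Dpoly A₁ r δ) ((r : ℤ) - l - 1) := by
  intro i hi
  rw [Dpoly_coeff]
  by_cases h : i < r
  · rw [if_pos h]
    exact dseq_vanish δ l h0 (r - 1 - i) (by omega)
  · rw [if_neg h]

/-! ### Divisibility -/

lemma R_zero (hr : 2 ≤ r) {R : Polynomial F} (hRdeg : R.natDegree < r)
    (hR : act R (gamF A₁ r) = 0) : R = 0 := by
  by_contra hne
  have hrow := congrFun hR (r - 1 - R.natDegree)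
  rw [act_apply, Finset.sum_range_succ] at hrow
  simp only [Pi.zero_apply] at hrow
  have hz : ∑ j ∈ Finset.range R.natDegree,
      R.coeff j * gamF A₁ r (r - 1 - R.natDegree + j) = 0 :=
    Finset.sum_eq_zero fun j hj => by
      have hj' := Finset.mem_range.1 hj
      rw [gam_small _ (by omega), mul_zero]
  have hidx : r - 1 - R.natDegree + R.natDegree = r - 1 := by omega
  rw [hz, zero_add, hidx, gam_top (by omega), mul_one] at hrow
  exact hne (Polynomial.leadingCoeff_eq_zero.mp hrow)

lemma act_sub (B C : Polynomial F) (α : ℕ → F) : act (B - C) α = act B α - act C α := by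
  simp [act, map_sub]

lemma dvd_of_act_zero (hr : 2 ≤ r) (hdeg : A₁.natDegree = r)
    {α : ℕ → F} (hα1 : act A₁ α = 0) (hα2 : act A₂ α = gamF A₁ r)
    {B : Polynomial F} (hB : act B α = 0) : A₁ ∣ B := by
  have hA1 : A₁ ≠ 0 := fun h => by rw [h] at hdeg; simp at hdeg; omega
  rw [← EuclideanDomain.mod_eq_zero]
  have hRdef : B % A₁ = B - A₁ * (B / A₁) :=
    eq_sub_of_add_eq' (EuclideanDomain.div_add_mod B A₁)
  have hactR : act (B % A₁) α = 0 := by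
    rw [hRdef, act_sub, hB, zero_sub, neg_eq_zero, mul_comm, act_mul, hα1, map_zero]
  have hgam : act (B % A₁) (gamF A₁ r) = 0 := by
    rw [← hα2, act_comm, hactR, map_zero]
  refine R_zero hr ?_ hgam
  by_cases h0 : B % A₁ = 0
  · simp [h0]; omega
  · exact hdeg ▸ Polynomial.natDegree_lt_natDegree h0 (EuclideanDomain.mod_lt B hA1)

/-! ### Vectors and polynomials -/

noncomputable def polyOf (m : ℕ) (v : Fin m → F) : Polynomial F :=
  ∑ j : Fin m, Polynomial.C (v j) * X ^ (j : ℕ)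

lemma polyOf_coeff {m : ℕ} (v : Fin m → F) (i : ℕ) :
    (polyOf m v).coeff i = if h : i < m then v ⟨i, h⟩ else 0 := by
  simp only [polyOf, Polynomial.finset_sum_coeff, Polynomial.coeff_C_mul,
    Polynomial.coeff_X_pow, mul_ite, mul_one, mul_zero]
  by_cases h : i < m
  · rw [dif_pos h]
    rw [Finset.sum_eq_single (⟨i, h⟩ : Fin m)]
    · simp
    · intro b _ hb
      rw [if_neg]
      intro hc
      exact hb (by ext; simp [← hc])
    · intro hc
      exact absurd (Finset.mem_univ _) hc
  · rw [dif_neg h]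
    refine Finset.sum_eq_zero fun j _ => ?_
    rw [if_neg]
    have := j.2
    omega

lemma polyOf_coeff_ge {m : ℕ} (v : Fin m → F) (j : ℕ) (h : m ≤ j) :
    (polyOf m v).coeff j = 0 := by
  rw [polyOf_coeff, dif_neg (by omega)]

lemma mulVec_eq_act {l m : ℕ} (α : ℕ → F) (v : Fin m → F) (B : Polynomial F)
    (hBc : ∀ (j : ℕ) (h : j < m), B.coeff j = v ⟨j, h⟩)
    (hB' : ∀ j, m ≤ j → B.coeff j = 0) (i : Fin l) :
    (hankel F l m α).mulVec v i = act B α i := by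
  rw [act_apply_ext B α i m hB']
  rw [Matrix.mulVec, dotProduct]
  rw [← Fin.sum_univ_eq_sum_range (fun j => B.coeff j * α (i + j)) m]
  refine Finset.sum_congr rfl fun j _ => ?_
  rw [hBc j j.2]
  simp [hankel, mul_comm]

/-! ### The kernel characterization -/

lemma ker_char (hr : 2 ≤ r) (hdeg : A₁.natDegree = r) (hlead : A₁.coeff r ≠ 0)
    (hA2deg : A₂.natDegree + r ≤ n + 2)
    {α : ℕ → F} (hα1 : act A₁ α = 0) (hα2 : act A₂ α = gamF A₁ r)
    (l m : ℕ) (hl : 1 ≤ l) (hm : 1 ≤ m) (hlm : l + m = n + 2) :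
    {v : Fin m → F | (hankel F l m α).mulVec v = 0} =
    {v : Fin m → F | ∃ B₁ B₂ : Polynomial F,
      degLE F B₁ ((m : ℤ) - r - 1) ∧ degLE F B₂ ((m : ℤ) - ((n : ℤ) + 2 - r) - 1) ∧
      v = fun i : Fin m => (B₁ * A₁ + B₂ * A₂).coeff (i : ℕ)} := by
  have hA1ne : A₁ ≠ 0 := fun h => by rw [h] at hdeg; simp at hdeg; omega
  have hA2LE : degLE F A₂ ((n : ℤ) + 2 - r) :=
    degLE_of_natDegree_le (by push_cast; omega)
  have hA1LE : degLE F A₁ (r : ℤ) := degLE_of_natDegree_le (by rw [hdeg])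
  ext v
  simp only [Set.mem_setOf_eq]
  constructor
  · intro hv
    set B := polyOf m v with hB
    set l' := min l r with hl'
    set δ := act B α with hδdef
    have hδ1 : act A₁ δ = 0 := by
      rw [hδdef, act_comm, hα1, map_zero]
    have hδ0 : ∀ i, i < l' → δ i = 0 := by
      intro i hi
      have hil : i < l := by omega
      have := congrFun hv ⟨i, hil⟩
      simp only [Pi.zero_apply] at this
      have h5 := mulVec_eq_act α v B (fun j h => (polyOf_coeff v j).trans (dif_pos h))
        (fun j h => polyOf_coeff_ge v j h) ⟨i, hil⟩
      exact h5.symm.trans this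
    set D := Dpoly A₁ r δ with hD
    have hDγ : act D (gamF A₁ r) = δ := actD_eq (by omega) hdeg hlead δ hδ1
    have hDdeg : degLE F D ((r : ℤ) - l' - 1) := Dpoly_degLE δ l' (by omega) hδ0
    have hEact : act (B - D * A₂) α = 0 := by
      rw [act_sub, act_mul, hα2, hDγ, hδdef, sub_self]
    obtain ⟨B₁, hB₁⟩ := dvd_of_act_zero hr hdeg hα1 hα2 hEact
    have hBdeg : degLE F B ((m : ℤ) - 1) := by
      intro i hi
      exact polyOf_coeff_ge v i (by omega)
    have hDA2 : degLE F (D * A₂) ((m : ℤ) - 1) := by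
      rcases le_or_gt r l with hcase | hcase
      · have hD0 : D = 0 := eq_zero_of_degLE_neg (by omega) hDdeg
        rw [hD0, zero_mul]
        exact degLE_zero _
      · have : degLE F (D * A₂) (((r : ℤ) - l' - 1) + ((n : ℤ) + 2 - r)) :=
          degLE_mul hDdeg hA2LE
        refine degLE_mono ?_ this
        have : l' = l := by omega
        omega
    have hEdeg : degLE F (A₁ * B₁) ((m : ℤ) - 1) := by
      rw [← hB₁]
      exact degLE_sub hBdeg hDA2
    refine ⟨B₁, D, ?_, ?_, ?_⟩
    · by_cases hB10 : B₁ = 0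
      · rw [hB10]; exact degLE_zero _
      · refine degLE_of_natDegree_le ?_
        have h1 : (A₁ * B₁).natDegree = r + B₁.natDegree := by
          rw [Polynomial.natDegree_mul hA1ne hB10, hdeg]
        have h2 : ((A₁ * B₁).natDegree : ℤ) ≤ (m : ℤ) - 1 :=
          natDegree_cast_le_of_degLE hEdeg (mul_ne_zero hA1ne hB10)
        rw [h1] at h2
        push_cast at h2 ⊢
        omega
    · rcases le_or_gt r l with hcase | hcase
      · have hD0 : D = 0 := eq_zero_of_degLE_neg (by omega) hDdeg
        rw [hD0]; exact degLE_zero _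
      · refine degLE_mono ?_ hDdeg
        have h3 : l' = l := by omega
        omega
    · have hBeq : B₁ * A₁ + D * A₂ = B := by
        rw [mul_comm B₁ A₁, ← hB₁]; ring
      funext i
      rw [hBeq, hB, polyOf_coeff, dif_pos i.2]
  · rintro ⟨B₁, B₂, h1, h2, rfl⟩
    have hE1 : degLE F (B₁ * A₁) ((m : ℤ) - 1) :=
      degLE_mono (by omega) (degLE_mul h1 hA1LE)
    have hE2 : degLE F (B₂ * A₂) ((m : ℤ) - 1) :=
      degLE_mono (by omega) (degLE_mul h2 hA2LE)
    have hEdeg : degLE F (B₁ * A₁ + B₂ * A₂) ((m : ℤ) - 1) := degLE_add hE1 hE2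
    have key : ∀ i : Fin l,
        (hankel F l m α).mulVec (fun i : Fin m => (B₁ * A₁ + B₂ * A₂).coeff (i : ℕ)) i = 0 := by
      intro i
      rw [mulVec_eq_act α _ (B₁ * A₁ + B₂ * A₂) (fun j h => rfl)
        (fun j h => hEdeg j (by omega)) i]
      rw [act_add, act_mul, act_mul, hα1, map_zero, hα2]
      simp only [Pi.add_apply, Pi.zero_apply, zero_add]
      rw [act_apply]
      refine Finset.sum_eq_zero fun j hj => ?_
      by_cases hc : B₂.coeff j = 0
      · rw [hc, zero_mul]
      · have hj2 : (j : ℤ) ≤ (m : ℤ) - ((n : ℤ) + 2 - r) - 1 := by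
          by_contra hjc
          exact hc (h2 j (by omega))
        have hi2 := i.2
        rw [gam_small ((i : ℕ) + j) (by omega), mul_zero]
    funext i
    exact key i

/-! ### Rank computation -/

noncomputable def psiMap (A₁ : Polynomial F) (k m : ℕ) : (Fin k → F) →ₗ[F] (Fin m → F) where
  toFun c := fun i => (polyOf k c * A₁).coeff (i : ℕ)
  map_add' c c' := by
    funext i
    have h : polyOf k (c + c') = polyOf k c + polyOf k c' := by
      simp [polyOf, Finset.sum_add_distrib, add_mul, map_add]
    show (polyOf k (c + c') * A₁).coeff (i : ℕ) = _
    rw [h, add_mul, coeff_add]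
    rfl
  map_smul' a c := by
    funext i
    have h : polyOf k (a • c) = Polynomial.C a * polyOf k c := by
      simp only [polyOf, Finset.mul_sum, Pi.smul_apply, smul_eq_mul, C_mul, mul_assoc]
    show (polyOf k (a • c) * A₁).coeff (i : ℕ) = _
    rw [h, mul_assoc, coeff_C_mul]
    rfl

lemma psiMap_apply (A₁ : Polynomial F) (k m : ℕ) (c : Fin k → F) (i : Fin m) :
    psiMap A₁ k m c i = (polyOf k c * A₁).coeff (i : ℕ) := rfl

lemma psiMap_inj (hr : 2 ≤ r) (hdeg : A₁.natDegree = r) {n₂ : ℕ} (hrn₂ : r ≤ n₂) :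
    Function.Injective (psiMap A₁ (n₂ - r) n₂) := by
  have hA1ne : A₁ ≠ 0 := fun h => by rw [h] at hdeg; simp at hdeg; omega
  have hinj0 : ∀ c, psiMap A₁ (n₂ - r) n₂ c = 0 → c = 0 := by
    intro c hc
    have hP : polyOf (n₂ - r) c * A₁ = 0 := by
      ext j
      rw [coeff_zero]
      by_cases h : j < n₂
      · have := congrFun hc (⟨j, h⟩ : Fin n₂)
        simpa [psiMap_apply] using this
      · by_cases hP0 : polyOf (n₂ - r) c = 0
        · rw [hP0, zero_mul, coeff_zero]
        · have hkr : r < n₂ := by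
            rcases lt_or_ge r n₂ with hh | hh
            · exact hh
            · exfalso
              apply hP0
              ext jj
              rw [polyOf_coeff, dif_neg (by omega), coeff_zero]
          refine coeff_eq_zero_of_natDegree_lt ?_
          have hd : (polyOf (n₂ - r) c).natDegree ≤ n₂ - r - 1 :=
            natDegree_le_iff_coeff_eq_zero.2 fun N hN => polyOf_coeff_ge c N (by omega)
          have hdm := Polynomial.natDegree_mul_le (p := polyOf (n₂ - r) c) (q := A₁)
          rw [hdeg] at hdm
          omega
    have hP2 : polyOf (n₂ - r) c = 0 := by
      rcases mul_eq_zero.mp hP with h | h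
      · exact h
      · exact absurd h hA1ne
    funext kk
    have h2 := congrArg (fun p => Polynomial.coeff p (kk : ℕ)) hP2
    simp only [coeff_zero] at h2
    rw [polyOf_coeff, dif_pos kk.2] at h2
    simpa using h2
  intro c c' hcc
  have := hinj0 (c - c') (by rw [map_sub, hcc, sub_self])
  exact sub_eq_zero.mp this

lemma rank_hankel (hr : 2 ≤ r) (hdeg : A₁.natDegree = r) (hlead : A₁.coeff r ≠ 0)
    (hA2deg : A₂.natDegree + r ≤ n + 2) (hrn : r + r ≤ n + 2)
    {α : ℕ → F} (hα1 : act A₁ α = 0) (hα2 : act A₂ α = gamF A₁ r) :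
    (hankel F ((n + 2) / 2) ((n + 3) / 2) α).rank = r := by
  have hA1ne : A₁ ≠ 0 := fun h => by rw [h] at hdeg; simp at hdeg; omega
  set n₁ := (n + 2) / 2 with hn₁
  set n₂ := (n + 3) / 2 with hn₂
  have h12 : n₁ + n₂ = n + 2 := by omega
  have hrn₁ : r ≤ n₁ := by omega
  have hrn₂ : r ≤ n₂ := by omega
  have hset := ker_char hr hdeg hlead hA2deg hα1 hα2 n₁ n₂ (by omega) (by omega) h12
  have hker : LinearMap.ker (hankel F n₁ n₂ α).mulVecLin
      = LinearMap.range (psiMap A₁ (n₂ - r) n₂) := by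
    ext v
    rw [LinearMap.mem_ker, Matrix.mulVecLin_apply, LinearMap.mem_range]
    constructor
    · intro hv
      obtain ⟨B₁, B₂, h1, h2, hveq⟩ := (Set.ext_iff.mp hset v).mp hv
      have hB2 : B₂ = 0 := eq_zero_of_degLE_neg (by omega) h2
      refine ⟨fun kk : Fin (n₂ - r) => B₁.coeff kk, ?_⟩
      have hpoly : polyOf (n₂ - r) (fun kk : Fin (n₂ - r) => B₁.coeff kk) = B₁ := by
        ext j
        rw [polyOf_coeff]
        by_cases h : j < n₂ - r
        · rw [dif_pos h]
        · rw [dif_neg h, eq_comm]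
          exact h1 j (by omega)
      funext i
      rw [psiMap_apply, hpoly, hveq]
      simp [hB2]
    · rintro ⟨c, rfl⟩
      refine (Set.ext_iff.mp hset _).mpr ⟨polyOf (n₂ - r) c, 0,
        (fun i hi => polyOf_coeff_ge c i (by omega)), degLE_zero _, ?_⟩
      funext i
      rw [psiMap_apply]
      simp
  have hfr := LinearMap.finrank_range_add_finrank_ker (hankel F n₁ n₂ α).mulVecLin
  rw [hker, LinearMap.finrank_range_of_inj (psiMap_inj hr hdeg hrn₂),
    Module.finrank_fin_fun, Module.finrank_fin_fun] at hfr
  rw [Matrix.rank]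
  omega

/-! ### Determinants and rhoC -/

lemma det_rr_ne (hr : 2 ≤ r) (hdeg : A₁.natDegree = r) (hlead : A₁.coeff r ≠ 0)
    {α : ℕ → F} (hα1 : act A₁ α = 0) (hα2 : act A₂ α = gamF A₁ r) :
    (hankel F r r α).det ≠ 0 := by
  intro hdet
  obtain ⟨v, hv0, hv⟩ := (Matrix.exists_mulVec_eq_zero_iff).mpr hdet
  set B := polyOf r v with hBdef
  have hBne : B ≠ 0 := by
    intro h
    apply hv0
    funext j
    have h2 := congrArg (fun p => Polynomial.coeff p (j : ℕ)) h
    simp only [coeff_zero] at h2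
    rw [hBdef, polyOf_coeff, dif_pos j.2] at h2
    simpa using h2
  have hδ : act B α = 0 := by
    apply zero_of_act hdeg hlead
    · rw [act_comm, hα1, map_zero]
    · intro i hi
      have h5 := mulVec_eq_act α v B (fun j h => (polyOf_coeff v j).trans (dif_pos h))
        (fun j h => polyOf_coeff_ge v j h) (⟨i, hi⟩ : Fin r)
      have h6 := congrFun hv ⟨i, hi⟩
      simp only [Pi.zero_apply] at h6
      exact h5.symm.trans h6
  have hdvd := dvd_of_act_zero hr hdeg hα1 hα2 hδ
  have hBdeg : B.natDegree ≤ r - 1 :=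
    natDegree_le_iff_coeff_eq_zero.2 fun N hN => polyOf_coeff_ge v N (by omega)
  exact hBne (Polynomial.eq_zero_of_dvd_of_natDegree_lt hdvd (by omega))

lemma det_ll_zero (hr : 2 ≤ r) (hdeg : A₁.natDegree = r)
    {α : ℕ → F} (hα1 : act A₁ α = 0) (l : ℕ) (hl : r < l) :
    (hankel F l l α).det = 0 := by
  have hA1ne : A₁ ≠ 0 := fun h => by rw [h] at hdeg; simp at hdeg; omega
  rw [← Matrix.exists_mulVec_eq_zero_iff]
  set B := X ^ (l - 1 - r) * A₁ with hBdef
  have hBne : B ≠ 0 := mul_ne_zero (pow_ne_zero _ Polynomial.X_ne_zero) hA1ne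
  have hBdeg : B.natDegree = l - 1 := by
    rw [hBdef, Polynomial.natDegree_mul (pow_ne_zero _ Polynomial.X_ne_zero) hA1ne,
      Polynomial.natDegree_X_pow, hdeg]
    omega
  refine ⟨fun j : Fin l => B.coeff (j : ℕ), ?_, ?_⟩
  · intro h0
    have h2 := congrFun h0 (⟨l - 1, by omega⟩ : Fin l)
    simp only [Pi.zero_apply] at h2
    apply hBne
    apply Polynomial.leadingCoeff_eq_zero.mp
    rw [Polynomial.leadingCoeff, hBdeg]
    exact h2
  · funext i
    have h5 := mulVec_eq_act α (fun j : Fin l => B.coeff (j : ℕ)) B (fun j h => rfl)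
      (fun j h => coeff_eq_zero_of_natDegree_lt (by omega)) i
    rw [h5, hBdef, act_mul, hα1, map_zero]
    rfl

lemma rho_eq (hr : 2 ≤ r) (hdeg : A₁.natDegree = r) (hlead : A₁.coeff r ≠ 0)
    (hrn : r + r ≤ n + 2)
    {α : ℕ → F} (hα1 : act A₁ α = 0) (hα2 : act A₂ α = gamF A₁ r) :
    rhoC F n α = r := by
  have hmem : r ∈ {l | l ≤ (n + 2) / 2 ∧ (hankel F l l α).det ≠ 0} :=
    ⟨by omega, det_rr_ne hr hdeg hlead hα1 hα2⟩
  have hub : ∀ l ∈ {l | l ≤ (n + 2) / 2 ∧ (hankel F l l α).det ≠ 0}, l ≤ r := by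
    intro l hl
    by_contra h
    exact hl.2 (det_ll_zero hr hdeg hα1 l (by omega))
  exact le_antisymm (csSup_le ⟨r, hmem⟩ hub)
    (le_csSup ⟨(n + 2) / 2, fun l hl => hl.1⟩ hmem)


/-! ### Uniqueness -/

lemma bezout_zero {U V : Polynomial F} (hUV : U * A₁ + V * A₂ = 1) {x : ℕ → F}
    (h1 : act A₁ x = 0) (h2 : act A₂ x = 0) : x = 0 := by
  have h : act (U * A₁ + V * A₂) x = x := by rw [hUV, act_one]
  rw [act_add, act_mul, act_mul, h1, h2, map_zero, map_zero, add_zero] at h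
  exact h.symm

lemma char_rec (hr : 2 ≤ r) (hdeg : A₁.natDegree = r)
    (hA2deg : A₂.natDegree + r ≤ n + 2) (hrn : r + r ≤ n + 2)
    {α' : ℕ → F} (hchar : IsCharSeq F n r A₁ A₂ α') :
    (∀ s, s + r ≤ n → act A₁ α' s = 0) ∧
    (∀ s, s + (n + 2 - r) ≤ n → act A₂ α' s = 0) := by
  have hset := hchar 1 (n + 1) le_rfl (by omega) (by omega)
  constructor
  · intro s hs
    have hd1 : degLE F (X ^ s : Polynomial F) (((n : ℤ) + 1) - r - 1) := by
      intro i hi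
      rw [Polynomial.coeff_X_pow, if_neg (by omega)]
    have hfun : (fun i : Fin (n + 1) => ((X ^ s : Polynomial F) * A₁).coeff (i : ℕ))
        = fun i : Fin (n + 1) => ((X ^ s : Polynomial F) * A₁ + 0 * A₂).coeff (i : ℕ) := by
      funext i; simp
    have h0 := (Set.ext_iff.mp hset _).mpr ⟨X ^ s, 0, by exact_mod_cast hd1, degLE_zero _, hfun⟩
    have hb : ((X ^ s : Polynomial F) * A₁).natDegree ≤ s + r :=
      le_trans (Polynomial.natDegree_mul_le) (by rw [Polynomial.natDegree_X_pow, hdeg])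
    have h5 := mulVec_eq_act α' (fun i : Fin (n + 1) => ((X ^ s : Polynomial F) * A₁).coeff (i : ℕ))
      ((X ^ s : Polynomial F) * A₁) (fun j h => rfl)
      (fun j h => coeff_eq_zero_of_natDegree_lt (by omega)) (⟨0, by omega⟩ : Fin 1)
    have h6 := congrFun h0 (⟨0, by omega⟩ : Fin 1)
    simp only [Pi.zero_apply] at h6
    have h7 : act ((X ^ s : Polynomial F) * A₁) α' 0 = 0 := h5.symm.trans h6
    rw [act_mul, act_X_pow] at h7
    simpa using h7
  · intro s hs
    have hd1 : degLE F (X ^ s : Polynomial F) (((n : ℤ) + 1) - ((n : ℤ) + 2 - r) - 1) := by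
      intro i hi
      rw [Polynomial.coeff_X_pow, if_neg (by omega)]
    have hfun : (fun i : Fin (n + 1) => ((X ^ s : Polynomial F) * A₂).coeff (i : ℕ))
        = fun i : Fin (n + 1) => (0 * A₁ + (X ^ s : Polynomial F) * A₂).coeff (i : ℕ) := by
      funext i; simp
    have h0 := (Set.ext_iff.mp hset _).mpr ⟨0, X ^ s, degLE_zero _, by exact_mod_cast hd1, hfun⟩
    have hb : ((X ^ s : Polynomial F) * A₂).natDegree ≤ s + A₂.natDegree :=
      le_trans (Polynomial.natDegree_mul_le) (by rw [Polynomial.natDegree_X_pow])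
    have h5 := mulVec_eq_act α' (fun i : Fin (n + 1) => ((X ^ s : Polynomial F) * A₂).coeff (i : ℕ))
      ((X ^ s : Polynomial F) * A₂) (fun j h => rfl)
      (fun j h => coeff_eq_zero_of_natDegree_lt (by omega)) (⟨0, by omega⟩ : Fin 1)
    have h6 := congrFun h0 (⟨0, by omega⟩ : Fin 1)
    simp only [Pi.zero_apply] at h6
    have h7 : act ((X ^ s : Polynomial F) * A₂) α' 0 = 0 := h5.symm.trans h6
    rw [act_mul, act_X_pow] at h7
    simpa using h7

lemma nonzero_window (hr : 2 ≤ r) (hrn : r + r ≤ n + 2) {α' : ℕ → F}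
    (hrank : (hankel F ((n + 2) / 2) ((n + 3) / 2) α').rank = r) :
    ∃ i, i ≤ n ∧ α' i ≠ 0 := by
  by_contra h
  push_neg at h
  have hz : hankel F ((n + 2) / 2) ((n + 3) / 2) α' = 0 := by
    ext i j
    have hi := i.2
    have hj := j.2
    simp only [hankel, Matrix.of_apply, Matrix.zero_apply]
    exact h (i.1 + j.1) (by omega)
  rw [hz, Matrix.rank_zero] at hrank
  omega

lemma good_facts (hr : 2 ≤ r) (hdeg : A₁.natDegree = r) (hlead : A₁.coeff r ≠ 0)
    (hA2deg : A₂.natDegree + r ≤ n + 2) (hrn : r + r ≤ n + 2)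
    {U V : Polynomial F} (hUV : U * A₁ + V * A₂ = 1)
    {α : ℕ → F} (hg : GoodSeq F n r A₁ A₂ α) :
    act A₁ (extV A₁ r α) = 0 ∧ (∀ i, i ≤ n → extV A₁ r α i = α i) ∧
    (∀ s, s < r - 1 → act A₂ (extV A₁ r α) s = 0) ∧
    act A₂ (extV A₁ r α) (r - 1) ≠ 0 ∧
    act A₁ (act A₂ (extV A₁ r α)) = 0 := by
  obtain ⟨hrec1, hrec2⟩ := char_rec hr hdeg hA2deg hrn hg.2.2.2
  have hbar_act : act A₁ (extV A₁ r α) = 0 := extV_act (by omega) hdeg hlead α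
  have hagree : ∀ i, i ≤ n → extV A₁ r α i = α i := extV_agree hdeg hlead α hrec1
  have hβ_act : act A₁ (act A₂ (extV A₁ r α)) = 0 := by
    rw [act_comm, hbar_act, map_zero]
  have hβ_small : ∀ s, s < r - 1 → act A₂ (extV A₁ r α) s = 0 := by
    intro s hs
    have h1 : act A₂ (extV A₁ r α) s = act A₂ α s := by
      rw [act_apply, act_apply]
      refine Finset.sum_congr rfl fun j hj => ?_
      have hj' := Finset.mem_range.1 hj
      rw [hagree (s + j) (by omega)]
    rw [h1]
    exact hrec2 s (by omega)
  refine ⟨hbar_act, hagree, hβ_small, ?_, hβ_act⟩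
  intro hb0
  have hβ0 : act A₂ (extV A₁ r α) = 0 := by
    apply zero_of_act hdeg hlead hβ_act
    intro i hi
    rcases lt_or_ge i (r - 1) with h | h
    · exact hβ_small i h
    · have hieq : i = r - 1 := by omega
      rw [hieq]
      exact hb0
  have hbar0 : extV A₁ r α = 0 := bezout_zero hUV hbar_act hβ0
  obtain ⟨i, hin, hne⟩ := nonzero_window hr hrn hg.1
  apply hne
  rw [← hagree i hin, hbar0]
  rfl

lemma scalar_of_good (hr : 2 ≤ r) (hdeg : A₁.natDegree = r) (hlead : A₁.coeff r ≠ 0)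
    (hA2deg : A₂.natDegree + r ≤ n + 2) (hrn : r + r ≤ n + 2)
    {U V : Polynomial F} (hUV : U * A₁ + V * A₂ = 1)
    {α α' : ℕ → F} (hg : GoodSeq F n r A₁ A₂ α) (hg' : GoodSeq F n r A₁ A₂ α') :
    ∃ c : F, c ≠ 0 ∧ ∀ i : ℕ, i ≤ n → α' i = c * α i := by
  obtain ⟨hact, hagree, hsmall, hb, hβact⟩ := good_facts hr hdeg hlead hA2deg hrn hUV hg
  obtain ⟨hact', hagree', hsmall', hb', hβact'⟩ := good_facts hr hdeg hlead hA2deg hrn hUV hg'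
  set bar := extV A₁ r α with hbardef
  set bar' := extV A₁ r α' with hbardef'
  set b := act A₂ bar (r - 1) with hbdef
  set b' := act A₂ bar' (r - 1) with hbdef'
  have hη : b • act A₂ bar' - b' • act A₂ bar = 0 := by
    apply zero_of_act hdeg hlead
    · rw [map_sub, _root_.map_smul, _root_.map_smul, hβact, hβact', smul_zero, smul_zero,
        sub_self]
    · intro i hi
      rcases lt_or_ge i (r - 1) with h | h
      · simp [hsmall i h, hsmall' i h]
      · have hieq : i = r - 1 := by omega
        simp only [Pi.sub_apply, Pi.smul_apply, smul_eq_mul, hieq]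
        rw [← hbdef, ← hbdef']
        ring
  have hbars : b • bar' - b' • bar = 0 := by
    apply bezout_zero hUV
    · rw [map_sub, _root_.map_smul, _root_.map_smul, hact, hact', smul_zero, smul_zero,
        sub_self]
    · rw [map_sub, _root_.map_smul, _root_.map_smul]
      exact hη
  refine ⟨b⁻¹ * b', mul_ne_zero (inv_ne_zero hb) hb', ?_⟩
  intro i hin
  have h1 := congrFun hbars i
  simp only [Pi.sub_apply, Pi.smul_apply, smul_eq_mul, Pi.zero_apply, sub_eq_zero] at h1
  have h2 : bar' i = α' i := hagree' i hin
  have h3 : bar i = α i := hagree i hin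
  rw [h2, h3] at h1
  rw [mul_assoc, ← h1, inv_mul_cancel_left₀ hb]


end Main
end S8

/-- for coprime `A₁, A₂` with `r = deg A₁ ≥ 2` and
`n ≥ max{r, deg A₂} + r - 2` there is a sequence `α ∈ F^{n+1}` with
`rank H_{n₁,n₂}(α) = r`, `ρ(α) = r`, `π(α) = 0` and characteristic polynomials `A₁, A₂`,
and `α` is unique up to multiplication by elements of `F^*`. -/
theorem stmt_8 (F : Type) [Field F] [Fintype F] (A₁ A₂ : Polynomial F) (r n : ℕ)
    (hcop : IsCoprime A₁ A₂) (hr : 2 ≤ r) (hdeg : A₁.natDegree = r)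
    (hn : max r A₂.natDegree + r ≤ n + 2) :
    (∃ α : ℕ → F, GoodSeq F n r A₁ A₂ α) ∧
    (∀ α α' : ℕ → F, GoodSeq F n r A₁ A₂ α → GoodSeq F n r A₁ A₂ α' →
      ∃ c : F, c ≠ 0 ∧ ∀ i : ℕ, i ≤ n → α' i = c * α i) := by
  obtain ⟨U, V, hUV⟩ := hcop
  have hA1ne : A₁ ≠ 0 := fun h => by rw [h] at hdeg; simp at hdeg; omega
  have hlead : A₁.coeff r ≠ 0 := by
    rw [← hdeg]
    exact fun h => hA1ne (Polynomial.leadingCoeff_eq_zero.mp h)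
  have hA2deg : A₂.natDegree + r ≤ n + 2 := by
    have := le_max_right r A₂.natDegree; omega
  have hrn : r + r ≤ n + 2 := by
    have := le_max_left r A₂.natDegree; omega
  have hα1 : S8.act A₁ (S8.act V (S8.gamF A₁ r)) = 0 := by
    rw [S8.act_comm, S8.gam_act (by omega) hdeg hlead, map_zero]
  have hα2 : S8.act A₂ (S8.act V (S8.gamF A₁ r)) = S8.gamF A₁ r := by
    rw [← S8.act_mul]
    have hAV : A₂ * V = 1 - U * A₁ := by linear_combination hUV
    rw [hAV, S8.act_sub, S8.act_one, S8.act_mul, S8.gam_act (by omega) hdeg hlead,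
      map_zero, sub_zero]
  constructor
  · refine ⟨S8.act V (S8.gamF A₁ r), ?_, ?_, ?_, ?_⟩
    · exact S8.rank_hankel hr hdeg hlead hA2deg hrn hα1 hα2
    · exact S8.rho_eq hr hdeg hlead hrn hα1 hα2
    · rw [piC, S8.rank_hankel hr hdeg hlead hA2deg hrn hα1 hα2,
        S8.rho_eq hr hdeg hlead hrn hα1 hα2, Nat.sub_self]
    · intro l m hl hm hlm
      exact S8.ker_char hr hdeg hlead hA2deg hα1 hα2 l m hl hm hlm
  · intro α α' hg hg'
    exact S8.scalar_of_good hr hdeg hlead hA2deg hrn hUV hg hg'
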